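/- arXiv:1712.01431 — 2 statements merged into one kernel-verified Lean document; each statement's English description precedes it below -/
import Mathlib

section
/- Let A and B be N×N nonnegative real matrices and θ ∈ (0,1). Then ρ(A^{(1-θ)} ⊙ B^{(θ)}) ≤ ρ(A)^{1-θ} ρ(B)^{θ}, where ⊙ is the Hadamard (entrywise) product, X^{(θ)} denotes the entrywise θ-th power of a nonnegative matrix X, and ρ denotes the spectral radius. -/
open scoped ENNReal NNReal
open Finset Filter Topology

attribute [local instance] Matrix.linftyOpNormedRing Matrix.linftyOpNormedAlgebra

/-- The spectral radius of a real square matrix: the supremum of the moduli of its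
complex eigenvalues (roots of its characteristic polynomial over `ℂ`). -/
noncomputable def specRad {N : ℕ} (A : Matrix (Fin N) (Fin N) ℝ) : ℝ :=
  sSup {r : ℝ | ∃ μ : ℂ, ((A.map (algebraMap ℝ ℂ)).charpoly).IsRoot μ ∧ r = ‖μ‖}

lemma EJD.mem_spec_iff {n : ℕ} (M : Matrix (Fin n) (Fin n) ℂ) (μ : ℂ) :
    μ ∈ spectrum ℂ M ↔ M.charpoly.IsRoot μ := by
  rw [spectrum.mem_iff, Matrix.charpoly, Polynomial.IsRoot, _root_.eval_det,
    Matrix.matPolyEquiv_charmatrix, Polynomial.eval_sub, Polynomial.eval_X, Polynomial.eval_C]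
  have : (algebraMap ℂ (Matrix (Fin n) (Fin n) ℂ)) μ = Matrix.scalar (Fin n) μ := rfl
  rw [this, Matrix.isUnit_iff_isUnit_det, isUnit_iff_ne_zero, not_ne_iff]

lemma EJD.specRad_nonneg {N : ℕ} (A : Matrix (Fin N) (Fin N) ℝ) : 0 ≤ specRad A :=
  Real.sSup_nonneg (by rintro r ⟨μ, -, rfl⟩; positivity)

lemma EJD.spectralRadius_ne_top {N : ℕ} (M : Matrix (Fin N) (Fin N) ℂ) :
    spectralRadius ℂ M ≠ ⊤ := by
  refine ((spectrum.spectralRadius_le_pow_nnnorm_pow_one_div ℂ M 0).trans_lt ?_).ne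
  exact ENNReal.mul_lt_top (ENNReal.rpow_lt_top_of_nonneg (by norm_num) ENNReal.coe_ne_top)
    (ENNReal.rpow_lt_top_of_nonneg (by norm_num) ENNReal.coe_ne_top)

lemma EJD.le_specRadius_of_mem {N : ℕ} {M : Matrix (Fin N) (Fin N) ℂ} {μ : ℂ}
    (hμ : μ ∈ spectrum ℂ M) : (‖μ‖₊ : ℝ≥0∞) ≤ spectralRadius ℂ M :=
  le_iSup₂ (f := fun k (_ : k ∈ spectrum ℂ M) => (‖k‖₊ : ℝ≥0∞)) μ hμ

lemma EJD.specRad_le_toReal {N : ℕ} (A : Matrix (Fin N) (Fin N) ℝ) :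
    specRad A ≤ (spectralRadius ℂ (A.map (algebraMap ℝ ℂ))).toReal := by
  apply Real.sSup_le _ ENNReal.toReal_nonneg
  rintro r ⟨μ, hμ, rfl⟩
  have h1 : (‖μ‖₊ : ℝ≥0∞) ≤ spectralRadius ℂ (A.map (algebraMap ℝ ℂ)) :=
    EJD.le_specRadius_of_mem ((EJD.mem_spec_iff _ μ).2 hμ)
  have := ENNReal.toReal_mono (EJD.spectralRadius_ne_top _) h1
  simpa using this

lemma EJD.toReal_le_specRad {N : ℕ} (A : Matrix (Fin N) (Fin N) ℝ) :
    (spectralRadius ℂ (A.map (algebraMap ℝ ℂ))).toReal ≤ specRad A := by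
  set M := A.map (algebraMap ℝ ℂ)
  have hbdd : BddAbove {r : ℝ | ∃ μ : ℂ, (M.charpoly).IsRoot μ ∧ r = ‖μ‖} := by
    have hfin : {μ : ℂ | M.charpoly.IsRoot μ}.Finite :=
      Polynomial.finite_setOf_isRoot (Matrix.charpoly_monic M).ne_zero
    have : {r : ℝ | ∃ μ : ℂ, (M.charpoly).IsRoot μ ∧ r = ‖μ‖}
        = (fun μ : ℂ => ‖μ‖) '' {μ : ℂ | M.charpoly.IsRoot μ} := by
      ext r; simp [eq_comm, Set.mem_image]
    rw [this]
    exact (hfin.image _).bddAbove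
  have h : spectralRadius ℂ M ≤ ENNReal.ofReal (specRad A) := by
    refine iSup₂_le fun μ hμ => ?_
    have hle : ‖μ‖ ≤ specRad A :=
      le_csSup hbdd ⟨μ, (EJD.mem_spec_iff _ μ).1 hμ, rfl⟩
    calc (‖μ‖₊ : ℝ≥0∞) = ENNReal.ofReal ‖μ‖ := by
          rw [ENNReal.ofReal_eq_coe_nnreal (norm_nonneg μ)]; rfl
      _ ≤ ENNReal.ofReal (specRad A) := ENNReal.ofReal_le_ofReal hle
  exact ENNReal.toReal_le_of_le_ofReal (EJD.specRad_nonneg A) h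

lemma EJD.holder_sum {ι : Type*} (s : Finset ι) (x y : ι → ℝ) (hx : ∀ i, 0 ≤ x i)
    (hy : ∀ i, 0 ≤ y i) {θ : ℝ} (h0 : 0 < θ) (h1 : θ < 1) :
    ∑ i ∈ s, x i ^ (1 - θ) * y i ^ θ ≤ (∑ i ∈ s, x i) ^ (1 - θ) * (∑ i ∈ s, y i) ^ θ := by
  have h1θ : 0 < 1 - θ := by linarith
  have hpq : Real.HolderConjugate (1 - θ)⁻¹ θ⁻¹ :=
    Real.holderConjugate_iff.mpr ⟨(one_lt_inv₀ h1θ).2 (by linarith), by rw [inv_inv, inv_inv]; ring⟩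
  have := Real.inner_le_Lp_mul_Lq_of_nonneg s hpq
    (f := fun i => x i ^ (1 - θ)) (g := fun i => y i ^ θ)
    (fun i _ => Real.rpow_nonneg (hx i) _) (fun i _ => Real.rpow_nonneg (hy i) _)
  simpa [← Real.rpow_natCast, ← Real.rpow_mul, hx _, hy _,
    mul_inv_cancel₀ h1θ.ne', mul_inv_cancel₀ h0.ne', Real.rpow_one,
    one_div, inv_inv] using this

lemma EJD.pow_entry_nonneg {N : ℕ} {A : Matrix (Fin N) (Fin N) ℝ} (hA : ∀ i j, 0 ≤ A i j)
    (k : ℕ) : ∀ i j, 0 ≤ (A ^ k) i j := by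
  induction k with
  | zero => intro i j; rw [pow_zero]; by_cases h : i = j <;> simp [Matrix.one_apply, h]
  | succ k ih =>
      intro i j
      rw [pow_succ, Matrix.mul_apply]
      exact Finset.sum_nonneg fun l _ => mul_nonneg (ih i l) (hA l j)

lemma EJD.pow_entry_le {N : ℕ} (A B : Matrix (Fin N) (Fin N) ℝ)
    (hA : ∀ i j, 0 ≤ A i j) (hB : ∀ i j, 0 ≤ B i j)
    {θ : ℝ} (h0 : 0 < θ) (h1 : θ < 1) (k : ℕ) : ∀ i j,
    ((Matrix.of fun i j => A i j ^ (1 - θ) * B i j ^ θ) ^ k) i j ≤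
      ((A ^ k) i j) ^ (1 - θ) * ((B ^ k) i j) ^ θ := by
  set C := Matrix.of fun i j => A i j ^ (1 - θ) * B i j ^ θ with hC
  induction k with
  | zero =>
      intro i j
      simp only [pow_zero]
      by_cases h : i = j <;>
        simp [Matrix.one_apply, h, Real.zero_rpow h0.ne', Real.zero_rpow (by linarith : 1 - θ ≠ 0)]
  | succ k ih =>
      intro i j
      rw [pow_succ, pow_succ, pow_succ, Matrix.mul_apply, Matrix.mul_apply, Matrix.mul_apply]
      calc ∑ l, (C ^ k) i l * C l j
          ≤ ∑ l, ((A ^ k) i l * A l j) ^ (1 - θ) * ((B ^ k) i l * B l j) ^ θ := by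
            refine Finset.sum_le_sum fun l _ => ?_
            have h2 : C l j = (A l j) ^ (1 - θ) * (B l j) ^ θ := rfl
            calc (C ^ k) i l * C l j
                ≤ ((A ^ k) i l) ^ (1 - θ) * ((B ^ k) i l) ^ θ *
                    ((A l j) ^ (1 - θ) * (B l j) ^ θ) := by
                  rw [h2]
                  refine mul_le_mul_of_nonneg_right (ih i l) ?_
                  exact mul_nonneg (Real.rpow_nonneg (hA l j) _) (Real.rpow_nonneg (hB l j) _)
              _ = ((A ^ k) i l * A l j) ^ (1 - θ) * ((B ^ k) i l * B l j) ^ θ := by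
                  rw [Real.mul_rpow (EJD.pow_entry_nonneg hA k i l) (hA l j),
                    Real.mul_rpow (EJD.pow_entry_nonneg hB k i l) (hB l j)]
                  ring
        _ ≤ (∑ l, (A ^ k) i l * A l j) ^ (1 - θ) * (∑ l, (B ^ k) i l * B l j) ^ θ :=
            EJD.holder_sum _ _ _ (fun l => mul_nonneg (EJD.pow_entry_nonneg hA k i l) (hA l j))
              (fun l => mul_nonneg (EJD.pow_entry_nonneg hB k i l) (hB l j)) h0 h1

lemma EJD.row_sum_le_norm {N : ℕ} (M : Matrix (Fin N) (Fin N) ℝ) (hM : ∀ i j, 0 ≤ M i j)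
    (i : Fin N) : ∑ j, M i j ≤ ‖M‖ := by
  calc ∑ j, M i j = ((∑ j, ‖M i j‖₊ : ℝ≥0) : ℝ) := by
        push_cast
        exact Finset.sum_congr rfl fun j _ => (Real.norm_of_nonneg (hM i j)).symm
    _ ≤ ‖M‖ := by
        rw [Matrix.linfty_opNorm_def]
        exact NNReal.coe_le_coe.2
          (Finset.le_sup (f := fun i => ∑ j, ‖M i j‖₊) (Finset.mem_univ i))

lemma EJD.nnnorm_pow_le {N : ℕ} (A B : Matrix (Fin N) (Fin N) ℝ)
    (hA : ∀ i j, 0 ≤ A i j) (hB : ∀ i j, 0 ≤ B i j)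
    {θ : ℝ} (h0 : 0 < θ) (h1 : θ < 1) (k : ℕ) :
    ‖(Matrix.of fun i j => A i j ^ (1 - θ) * B i j ^ θ) ^ k‖₊ ≤
      ‖A ^ k‖₊ ^ (1 - θ) * ‖B ^ k‖₊ ^ θ := by
  set C := Matrix.of fun i j => A i j ^ (1 - θ) * B i j ^ θ with hCdef
  have hC : ∀ i j, 0 ≤ C i j := fun i j =>
    mul_nonneg (Real.rpow_nonneg (hA i j) _) (Real.rpow_nonneg (hB i j) _)
  rw [Matrix.linfty_opNNNorm_def]
  refine Finset.sup_le fun i _ => ?_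
  rw [← NNReal.coe_le_coe]
  push_cast [NNReal.coe_rpow]
  calc ∑ j, ‖(C ^ k) i j‖
      = ∑ j, (C ^ k) i j :=
        Finset.sum_congr rfl fun j _ => Real.norm_of_nonneg (EJD.pow_entry_nonneg hC k i j)
    _ ≤ ∑ j, ((A ^ k) i j) ^ (1 - θ) * ((B ^ k) i j) ^ θ :=
        Finset.sum_le_sum fun j _ => EJD.pow_entry_le A B hA hB h0 h1 k i j
    _ ≤ (∑ j, (A ^ k) i j) ^ (1 - θ) * (∑ j, (B ^ k) i j) ^ θ :=
        EJD.holder_sum _ _ _ (fun j => EJD.pow_entry_nonneg hA k i j)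
          (fun j => EJD.pow_entry_nonneg hB k i j) h0 h1
    _ ≤ ‖A ^ k‖ ^ (1 - θ) * ‖B ^ k‖ ^ θ := by
        refine mul_le_mul ?_ ?_ (Real.rpow_nonneg
          (Finset.sum_nonneg fun j _ => EJD.pow_entry_nonneg hB k i j) _)
          (Real.rpow_nonneg (norm_nonneg _) _)
        · exact Real.rpow_le_rpow
            (Finset.sum_nonneg fun j _ => EJD.pow_entry_nonneg hA k i j)
            (EJD.row_sum_le_norm _ (EJD.pow_entry_nonneg hA k) i) (by linarith)
        · exact Real.rpow_le_rpow
            (Finset.sum_nonneg fun j _ => EJD.pow_entry_nonneg hB k i j)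
            (EJD.row_sum_le_norm _ (EJD.pow_entry_nonneg hB k) i) (by linarith)

lemma EJD.nnnorm_map {N : ℕ} (X : Matrix (Fin N) (Fin N) ℝ) :
    ‖X.map (algebraMap ℝ ℂ)‖₊ = ‖X‖₊ := by
  rw [Matrix.linfty_opNNNorm_def, Matrix.linfty_opNNNorm_def]
  congr 1
  funext i
  refine Finset.sum_congr rfl fun j _ => ?_
  simp [Matrix.map_apply, Complex.nnnorm_real]

lemma EJD.map_pow {N : ℕ} (X : Matrix (Fin N) (Fin N) ℝ) (k : ℕ) :
    (X.map (algebraMap ℝ ℂ)) ^ k = (X ^ k).map (algebraMap ℝ ℂ) := by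
  have h1 : X.map (algebraMap ℝ ℂ) = (algebraMap ℝ ℂ).mapMatrix X := rfl
  have h2 : (X ^ k).map (algebraMap ℝ ℂ) = (algebraMap ℝ ℂ).mapMatrix (X ^ k) := rfl
  rw [h1, h2]; exact (_root_.map_pow ((algebraMap ℝ ℂ).mapMatrix) X k).symm

/-- Elsner–Johnson–Dias da Silva: `ρ(A^{(1-θ)} ⊙ B^{(θ)}) ≤ ρ(A)^{1-θ} ρ(B)^θ` for
nonnegative square matrices `A`, `B` and `θ ∈ (0,1)`, where `⊙` is the Hadamard
product and `X^{(θ)}` the entrywise power. -/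
theorem stmt_8 {N : ℕ} (A B : Matrix (Fin N) (Fin N) ℝ)
    (hA : ∀ i j, 0 ≤ A i j) (hB : ∀ i j, 0 ≤ B i j)
    (θ : ℝ) (hθ : θ ∈ Set.Ioo (0 : ℝ) 1) :
    specRad (Matrix.of fun i j => A i j ^ (1 - θ) * B i j ^ θ) ≤
      specRad A ^ (1 - θ) * specRad B ^ θ := by
  obtain ⟨h0, h1⟩ := hθ
  have h1θ : (0 : ℝ) ≤ 1 - θ := by linarith
  set C := Matrix.of fun i j => A i j ^ (1 - θ) * B i j ^ θ with hCdef
  set A' := A.map (algebraMap ℝ ℂ) with hA'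
  set B' := B.map (algebraMap ℝ ℂ) with hB'
  set C' := C.map (algebraMap ℝ ℂ) with hC'
  haveI : CompleteSpace (Matrix (Fin N) (Fin N) ℂ) := FiniteDimensional.complete ℂ _
  have hGA := spectrum.pow_nnnorm_pow_one_div_tendsto_nhds_spectralRadius A'
  have hGB := spectrum.pow_nnnorm_pow_one_div_tendsto_nhds_spectralRadius B'
  have hGC := spectrum.pow_nnnorm_pow_one_div_tendsto_nhds_spectralRadius C'
  -- the limit of the RHS sequence
  have hmul : Tendsto (fun n : ℕ =>
      ((‖A' ^ n‖₊ : ℝ≥0∞) ^ (1 / n : ℝ)) ^ (1 - θ) * ((‖B' ^ n‖₊ : ℝ≥0∞) ^ (1 / n : ℝ)) ^ θ)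
      atTop (𝓝 ((spectralRadius ℂ A') ^ (1 - θ) * (spectralRadius ℂ B') ^ θ)) := by
    refine ENNReal.Tendsto.mul (hGA.ennrpow_const _) ?_ (hGB.ennrpow_const _) ?_
    · exact Or.inr (ENNReal.rpow_ne_top_of_nonneg h0.le (EJD.spectralRadius_ne_top B'))
    · exact Or.inr (ENNReal.rpow_ne_top_of_nonneg h1θ (EJD.spectralRadius_ne_top A'))
  -- the pointwise bound
  have hpt : ∀ n : ℕ, (‖C' ^ n‖₊ : ℝ≥0∞) ^ (1 / n : ℝ) ≤
      ((‖A' ^ n‖₊ : ℝ≥0∞) ^ (1 / n : ℝ)) ^ (1 - θ) * ((‖B' ^ n‖₊ : ℝ≥0∞) ^ (1 / n : ℝ)) ^ θ := by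
    intro n
    have hkey : (‖C' ^ n‖₊ : ℝ≥0∞) ≤ (‖A' ^ n‖₊ : ℝ≥0∞) ^ (1 - θ) * (‖B' ^ n‖₊ : ℝ≥0∞) ^ θ := by
      rw [hA', hB', hC', EJD.map_pow, EJD.map_pow, EJD.map_pow,
        EJD.nnnorm_map, EJD.nnnorm_map, EJD.nnnorm_map,
        ← ENNReal.coe_rpow_of_nonneg _ h1θ, ← ENNReal.coe_rpow_of_nonneg _ h0.le,
        ← ENNReal.coe_mul, ENNReal.coe_le_coe]
      exact EJD.nnnorm_pow_le A B hA hB h0 h1 n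
    calc (‖C' ^ n‖₊ : ℝ≥0∞) ^ (1 / n : ℝ)
        ≤ ((‖A' ^ n‖₊ : ℝ≥0∞) ^ (1 - θ) * (‖B' ^ n‖₊ : ℝ≥0∞) ^ θ) ^ (1 / n : ℝ) :=
          ENNReal.rpow_le_rpow hkey (by positivity)
      _ = ((‖A' ^ n‖₊ : ℝ≥0∞) ^ (1 / n : ℝ)) ^ (1 - θ) *
            ((‖B' ^ n‖₊ : ℝ≥0∞) ^ (1 / n : ℝ)) ^ θ := by
          rw [ENNReal.mul_rpow_of_nonneg _ _ (by positivity), ← ENNReal.rpow_mul,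
            ← ENNReal.rpow_mul, ← ENNReal.rpow_mul, ← ENNReal.rpow_mul,
            mul_comm (1 - θ) (1 / n : ℝ), mul_comm θ (1 / n : ℝ)]
  -- conclude in ℝ≥0∞
  have hE : spectralRadius ℂ C' ≤
      (spectralRadius ℂ A') ^ (1 - θ) * (spectralRadius ℂ B') ^ θ :=
    le_of_tendsto_of_tendsto' hGC hmul hpt
  -- convert to reals
  have hne : (spectralRadius ℂ A') ^ (1 - θ) * (spectralRadius ℂ B') ^ θ ≠ ⊤ :=
    ENNReal.mul_ne_top (ENNReal.rpow_ne_top_of_nonneg h1θ (EJD.spectralRadius_ne_top A'))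
      (ENNReal.rpow_ne_top_of_nonneg h0.le (EJD.spectralRadius_ne_top B'))
  have h2 := ENNReal.toReal_mono hne hE
  rw [ENNReal.toReal_mul, ← ENNReal.toReal_rpow, ← ENNReal.toReal_rpow] at h2
  calc specRad C ≤ (spectralRadius ℂ C').toReal := EJD.specRad_le_toReal C
    _ ≤ (spectralRadius ℂ A').toReal ^ (1 - θ) * (spectralRadius ℂ B').toReal ^ θ := h2
    _ ≤ specRad A ^ (1 - θ) * specRad B ^ θ := by
        refine mul_le_mul (Real.rpow_le_rpow ENNReal.toReal_nonneg (EJD.toReal_le_specRad A) h1θ)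
          (Real.rpow_le_rpow ENNReal.toReal_nonneg (EJD.toReal_le_specRad B) h0.le)
          (Real.rpow_nonneg ENNReal.toReal_nonneg _) (Real.rpow_nonneg (EJD.specRad_nonneg A) _)
end

section
/- Let v ∈ (0,1), μ > 0, and for τ ∈ (0,1) define the 2×2 matrix B(τ, s) = v·[[τ, (1-τ)e^{μs}], [(1-τ)e^{μs}, τ]]. Then ρ(B(τ,s)) = v(τ + (1-τ)e^{μs}), and the unique s > 0 solving ρ(B(τ,s)) = 1 is α(τ) = (1/μ) log(1 + (1/v - 1)/(1-τ)), which is strictly increasing in τ on (0,1). -/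
lemma specRad_symm2 (a b : ℝ) (ha : 0 ≤ a) (hb : 0 ≤ b) :
    specRad !![a, b; b, a] = a + b := by
  have hmap : (!![a, b; b, a]).map (algebraMap ℝ ℂ) = !![(a:ℂ), b; b, a] := by
    ext i j; fin_cases i <;> fin_cases j <;> simp [Matrix.map_apply]
  have hroot : ∀ z : ℂ, ((!![(a:ℂ), b; b, a]).charpoly).IsRoot z ↔
      z = (a:ℂ) + b ∨ z = (a:ℂ) - b := by
    intro z
    have hcp : (!![(a:ℂ), b; b, a]).charpoly =
        (Polynomial.X - Polynomial.C (a:ℂ)) * (Polynomial.X - Polynomial.C (a:ℂ)) -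
          (-Polynomial.C (b:ℂ)) * (-Polynomial.C (b:ℂ)) := by
      rw [Matrix.charpoly, Matrix.det_fin_two]
      simp [Matrix.charmatrix_apply]
    rw [hcp]
    simp only [Polynomial.IsRoot, Polynomial.eval_add, Polynomial.eval_sub, Polynomial.eval_neg,
      Polynomial.eval_mul, Polynomial.eval_pow, Polynomial.eval_X, Polynomial.eval_C]
    constructor
    · intro h
      have : (z - ((a:ℂ) + b)) * (z - ((a:ℂ) - b)) = 0 := by ring_nf; ring_nf at h; linear_combination h
      rcases mul_eq_zero.mp this with h' | h' 
      · exact Or.inl (sub_eq_zero.mp h')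
      · exact Or.inr (sub_eq_zero.mp h')
    · rintro (rfl | rfl) <;> ring
  have hset : {r : ℝ | ∃ z : ℂ, ((!![a, b; b, a]).map (algebraMap ℝ ℂ)).charpoly.IsRoot z ∧
      r = ‖z‖} = {a + b, |a - b|} := by
    rw [hmap]
    ext r
    simp only [Set.mem_setOf_eq, Set.mem_insert_iff, Set.mem_singleton_iff]
    constructor
    · rintro ⟨z, hz, rfl⟩
      rcases (hroot z).mp hz with rfl | rfl
      · left
        rw [show (a:ℂ) + b = ((a + b : ℝ) : ℂ) by push_cast; ring, Complex.norm_real, Real.norm_eq_abs,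
          abs_of_nonneg (by linarith)]
      · right
        rw [show (a:ℂ) - b = ((a - b : ℝ) : ℂ) by push_cast; ring, Complex.norm_real, Real.norm_eq_abs]
    · rintro (rfl | rfl)
      · exact ⟨(a:ℂ) + b, (hroot _).mpr (Or.inl rfl), by
          rw [show (a:ℂ) + b = ((a + b : ℝ) : ℂ) by push_cast; ring, Complex.norm_real, Real.norm_eq_abs,
            abs_of_nonneg (by linarith)]⟩
      · exact ⟨(a:ℂ) - b, (hroot _).mpr (Or.inr rfl), by
          rw [show (a:ℂ) - b = ((a - b : ℝ) : ℂ) by push_cast; ring, Complex.norm_real, Real.norm_eq_abs]⟩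
  rw [specRad, hset, csSup_pair]
  have : |a - b| ≤ a + b := by
    rw [abs_le]; constructor <;> linarith
  exact sup_eq_left.mpr this

lemma smul_two (v a b : ℝ) : v • !![a, b; b, a] = !![v*a, v*b; v*b, v*a] := by
  ext i j; fin_cases i <;> fin_cases j <;> simp [Matrix.smul_apply]

lemma specRad_B (v : ℝ) (hv0 : 0 ≤ v) (τ c : ℝ) (hτ : 0 ≤ τ) (hc : 0 ≤ c) :
    specRad (v • !![τ, c; c, τ]) = v * (τ + c) := by
  rw [smul_two, specRad_symm2 (v*τ) (v*c) (mul_nonneg hv0 hτ) (mul_nonneg hv0 hc)]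
  ring

/-- Counterexample to monotonicity in persistence: for
`B(τ,s) = v·[[τ, (1-τ)e^{μs}],[(1-τ)e^{μs}, τ]]` the spectral radius is
`v(τ + (1-τ)e^{μs})`, the unique positive root of `ρ(B(τ,s)) = 1` is
`α(τ) = (1/μ)log(1 + (1/v - 1)/(1-τ))`, and `α` is strictly increasing on `(0,1)`. -/
theorem stmt_13 (v μ : ℝ) (hv : v ∈ Set.Ioo (0 : ℝ) 1) (hμ : 0 < μ) :
    (∀ τ ∈ Set.Ioo (0 : ℝ) 1, ∀ s : ℝ,
      specRad (v • !![τ, (1 - τ) * Real.exp (μ * s);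
                      (1 - τ) * Real.exp (μ * s), τ]) =
        v * (τ + (1 - τ) * Real.exp (μ * s))) ∧
    (∀ τ ∈ Set.Ioo (0 : ℝ) 1,
      0 < (1 / μ) * Real.log (1 + (1 / v - 1) / (1 - τ)) ∧
      specRad (v • !![τ, (1 - τ) * Real.exp (μ * ((1 / μ) * Real.log (1 + (1 / v - 1) / (1 - τ))));
                      (1 - τ) * Real.exp (μ * ((1 / μ) * Real.log (1 + (1 / v - 1) / (1 - τ)))), τ]) = 1 ∧
      (∀ s : ℝ, 0 < s →
        specRad (v • !![τ, (1 - τ) * Real.exp (μ * s);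
                        (1 - τ) * Real.exp (μ * s), τ]) = 1 →
        s = (1 / μ) * Real.log (1 + (1 / v - 1) / (1 - τ)))) ∧
    StrictMonoOn (fun τ : ℝ => (1 / μ) * Real.log (1 + (1 / v - 1) / (1 - τ)))
      (Set.Ioo (0 : ℝ) 1) := by
  obtain ⟨hv0, hv1⟩ := hv
  have hkey : ∀ τ ∈ Set.Ioo (0 : ℝ) 1, ∀ s : ℝ,
      specRad (v • !![τ, (1 - τ) * Real.exp (μ * s);
                      (1 - τ) * Real.exp (μ * s), τ]) =
        v * (τ + (1 - τ) * Real.exp (μ * s)) := by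
    intro τ hτ s
    exact specRad_B v hv0.le τ _ hτ.1.le
      (mul_nonneg (by linarith [hτ.2]) (Real.exp_pos _).le)
  refine ⟨hkey, ?_, ?_⟩
  · intro τ hτ
    obtain ⟨hτ0, hτ1⟩ := hτ
    have h1τ : 0 < 1 - τ := by linarith
    have hvinv : 0 < 1 / v - 1 := by
      have : 1 < 1 / v := (one_lt_div hv0).mpr hv1
      linarith
    have harg : 1 < 1 + (1 / v - 1) / (1 - τ) := by
      have := div_pos hvinv h1τ; linarith
    have hlog : 0 < Real.log (1 + (1 / v - 1) / (1 - τ)) := Real.log_pos harg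
    have hα : 0 < (1 / μ) * Real.log (1 + (1 / v - 1) / (1 - τ)) :=
      mul_pos (by positivity) hlog
    have hexp : Real.exp (μ * ((1 / μ) * Real.log (1 + (1 / v - 1) / (1 - τ)))) =
        1 + (1 / v - 1) / (1 - τ) := by
      rw [show μ * ((1 / μ) * Real.log (1 + (1 / v - 1) / (1 - τ))) =
        Real.log (1 + (1 / v - 1) / (1 - τ)) by field_simp]
      exact Real.exp_log (by linarith)
    refine ⟨hα, ?_, ?_⟩
    · rw [hkey τ ⟨hτ0, hτ1⟩, hexp]
      field_simp
      ring
    · intro s hs hspec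
      rw [hkey τ ⟨hτ0, hτ1⟩] at hspec
      have hinner : Real.exp (μ * s) = 1 + (1 / v - 1) / (1 - τ) := by
        field_simp at hspec ⊢
        nlinarith [Real.exp_pos (μ * s)]
      have : μ * s = Real.log (1 + (1 / v - 1) / (1 - τ)) := by
        rw [← hinner, Real.log_exp]
      rw [← this]; field_simp
  · intro τ1 h1 τ2 h2 hlt
    have hvinv : 0 < 1 / v - 1 := by
      have : 1 < 1 / v := (one_lt_div hv0).mpr hv1
      linarith
    have h1τ1 : 0 < 1 - τ1 := by linarith [h1.2]
    have h1τ2 : 0 < 1 - τ2 := by linarith [h2.2]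
    have hd : (1 / v - 1) / (1 - τ1) < (1 / v - 1) / (1 - τ2) :=
      div_lt_div_of_pos_left hvinv h1τ2 (by linarith)
    have hp1 : 0 < 1 + (1 / v - 1) / (1 - τ1) := by positivity
    dsimp only
    exact mul_lt_mul_of_pos_left
      (Real.log_lt_log (by positivity) (by linarith)) (by positivity)
end
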